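/- Let X be a T1 regular space. The hyperspace F(X) of all nonempty finite subsets of X, equipped with the Fell topology, is a D_1-space if and only if X is finite. -/

import Mathlib

open Set TopologicalSpace

universe u v

/-- The Fell topology on the collection of all subsets of `X`, generated by the subbase
consisting of the sets `U⁻ = {H | H ∩ U ≠ ∅}` for `U` open and
`(Kᶜ)⁺ = {H | H ⊆ Kᶜ}` for `K` compact. -/
def fellTopology (X : Type u) [TopologicalSpace X] : TopologicalSpace (Set X) :=
  TopologicalSpace.generateFrom
    ({S | ∃ U : Set X, IsOpen U ∧ S = {H : Set X | (H ∩ U).Nonempty}} ∪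
     {S | ∃ K : Set X, IsCompact K ∧ S = {H : Set X | H ⊆ Kᶜ}})

/-- The Vietoris topology on the collection of all subsets of `X`, generated by the subbase
consisting of the sets `U⁺ = {H | H ⊆ U}` and `U⁻ = {H | H ∩ U ≠ ∅}` for `U` open. -/
def vietorisTopology (X : Type u) [TopologicalSpace X] : TopologicalSpace (Set X) :=
  TopologicalSpace.generateFrom
    ({S | ∃ U : Set X, IsOpen U ∧ S = {H : Set X | H ⊆ U}} ∪
     {S | ∃ U : Set X, IsOpen U ∧ S = {H : Set X | (H ∩ U).Nonempty}})

/-- A collection `S` of subsets of `X`, viewed as a hyperspace with the Fell topology. -/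
def FellHyper (X : Type u) [TopologicalSpace X] (S : Set (Set X)) : Type u :=
  {A : Set X // A ∈ S}

/-- A collection `S` of subsets of `X`, viewed as a hyperspace with the Vietoris topology. -/
def VietorisHyper (X : Type u) [TopologicalSpace X] (S : Set (Set X)) : Type u :=
  {A : Set X // A ∈ S}

instance FellHyper.instTopologicalSpace (X : Type u) [TopologicalSpace X] (S : Set (Set X)) :
    TopologicalSpace (FellHyper X S) :=
  TopologicalSpace.induced (Subtype.val : {A : Set X // A ∈ S} → Set X) (fellTopology X)

instance VietorisHyper.instTopologicalSpace (X : Type u) [TopologicalSpace X] (S : Set (Set X)) :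
    TopologicalSpace (VietorisHyper X S) :=
  TopologicalSpace.induced (Subtype.val : {A : Set X // A ∈ S} → Set X) (vietorisTopology X)

/-- The underlying subset of `X` of a point of a Fell hyperspace. -/
def FellHyper.carrier {X : Type u} [TopologicalSpace X] {S : Set (Set X)}
    (A : FellHyper X S) : Set X :=
  Subtype.val A

/-- The underlying subset of `X` of a point of a Vietoris hyperspace. -/
def VietorisHyper.carrier {X : Type u} [TopologicalSpace X] {S : Set (Set X)}
    (A : VietorisHyper X S) : Set X :=
  Subtype.val A

/-- `CL(X)`: the nonempty closed subsets of `X`. -/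
def CL (X : Type u) [TopologicalSpace X] : Set (Set X) := {A | A.Nonempty ∧ IsClosed A}

/-- `𝒦(X)`: the nonempty compact subsets of `X`. -/
def Kcal (X : Type u) [TopologicalSpace X] : Set (Set X) := {A | A.Nonempty ∧ IsCompact A}

/-- `ℱ(X)`: the nonempty finite subsets of `X`. -/
def Fcal (X : Type u) : Set (Set X) := {A | A.Nonempty ∧ A.Finite}

/-- `ℱₙ(X)`: the nonempty subsets of `X` with at most `n` points. -/
def Fn (X : Type u) (n : ℕ) : Set (Set X) := {A | A.Nonempty ∧ A.encard ≤ n}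

/-- A space is a `D₁`-space if every nonempty closed subset has a countable
neighborhood base. -/
def IsD1Space (Y : Type v) [TopologicalSpace Y] : Prop :=
  ∀ F : Set Y, F.Nonempty → IsClosed F →
    ∃ B : ℕ → Set Y, (∀ n, IsOpen (B n) ∧ F ⊆ B n) ∧
      ∀ V : Set Y, IsOpen V → F ⊆ V → ∃ n, B n ⊆ V

/-- A space is a `D₀`-space if every nonempty compact subset has a countable
neighborhood base. -/
def IsD0Space (Y : Type v) [TopologicalSpace Y] : Prop :=
  ∀ F : Set Y, F.Nonempty → IsCompact F →
    ∃ B : ℕ → Set Y, (∀ n, IsOpen (B n) ∧ F ⊆ B n) ∧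
      ∀ V : Set Y, IsOpen V → F ⊆ V → ∃ n, B n ⊆ V

/-- A space has a `G_δ`-diagonal if the diagonal is a `G_δ`-set in `X × X`. -/
def HasGdeltaDiagonal (X : Type u) [TopologicalSpace X] : Prop :=
  ∃ U : ℕ → Set (X × X), (∀ n, IsOpen (U n)) ∧ (⋂ n, U n) = {p : X × X | p.1 = p.2}

/-- A space is perfect if every closed subset is a `G_δ`-set. -/
def IsPerfectSpace (Y : Type v) [TopologicalSpace Y] : Prop :=
  ∀ F : Set Y, IsClosed F → ∃ U : ℕ → Set Y, (∀ n, IsOpen (U n)) ∧ F = ⋂ n, U n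

/-- A space has the compact-`G_δ` property if every compact subset is a `G_δ`-set. -/
def CompactGDeltaProperty (Y : Type v) [TopologicalSpace Y] : Prop :=
  ∀ K : Set Y, IsCompact K → ∃ U : ℕ → Set Y, (∀ n, IsOpen (U n)) ∧ K = ⋂ n, U n

/-- `γ`-space. -/
def IsGammaSpace (Y : Type v) [TopologicalSpace Y] : Prop :=
  ∃ g : ℕ → Y → Set Y,
    (∀ n y, IsOpen (g n y) ∧ y ∈ g n y) ∧
    (∀ y, ∀ V : Set Y, IsOpen V → y ∈ V → ∃ n, g n y ⊆ V) ∧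
    (∀ n y, ∃ m, ∀ z ∈ g m y, g m z ⊆ g n y)

/-- A space has a `G_δ*`-diagonal if there is a sequence `𝒰 n` of open covers such that
`{x} = ⋂ n, closure (st(x, 𝒰 n))` for every `x`. -/
def HasGdeltaStarDiagonal (X : Type u) [TopologicalSpace X] : Prop :=
  ∃ 𝒰 : ℕ → Set (Set X),
    (∀ n, ∀ U ∈ 𝒰 n, IsOpen U) ∧ (∀ n, ⋃₀ 𝒰 n = univ) ∧
    ∀ x : X, (⋂ n, closure (⋃₀ {U ∈ 𝒰 n | x ∈ U})) = {x}

namespace Statement7Aux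

variable {X : Type u} [TopologicalSpace X]

variable {X : Type u} [TopologicalSpace X]

def FSub (X : Type u) [TopologicalSpace X] : Set (Set (Set X)) :=
  {S | ∃ U : Set X, IsOpen U ∧ S = {H : Set X | (H ∩ U).Nonempty}} ∪
  {S | ∃ K : Set X, IsCompact K ∧ S = {H : Set X | H ⊆ Kᶜ}}

lemma genOpen_minus {U : Set X} (hU : IsOpen U) :
    TopologicalSpace.GenerateOpen (FSub X) {H : Set X | (H ∩ U).Nonempty} :=
  .basic _ (Or.inl ⟨U, hU, rfl⟩)

lemma genOpen_plus {K : Set X} (hK : IsCompact K) :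
    TopologicalSpace.GenerateOpen (FSub X) {H : Set X | H ⊆ Kᶜ} :=
  .basic _ (Or.inr ⟨K, hK, rfl⟩)

lemma hyper_isOpen_iff {S : Set (Set X)} {B : Set (FellHyper X S)} :
    IsOpen B ↔ ∃ B', TopologicalSpace.GenerateOpen (FSub X) B' ∧ Subtype.val ⁻¹' B' = B :=
  Iff.rfl

lemma fell_gen {B : Set (Set X)} (hB : TopologicalSpace.GenerateOpen (FSub X) B) :
    ∀ H ∈ B, ∃ (T : Set (Set X)) (K : Set X),
      T.Finite ∧ (∀ U ∈ T, IsOpen U ∧ (H ∩ U).Nonempty) ∧ IsCompact K ∧ H ∩ K = ∅ ∧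
      ∀ H' : Set X, (∀ U ∈ T, (H' ∩ U).Nonempty) → H' ∩ K = ∅ → H' ∈ B := by
  induction hB with
  | basic s hs =>
    intro H hH
    rcases hs with ⟨U, hU, rfl⟩ | ⟨K, hK, rfl⟩
    · exact ⟨{U}, ∅, finite_singleton _,
        fun U' hU' => by rcases hU' with rfl; exact ⟨hU, hH⟩,
        isCompact_empty, inter_empty _, fun H' h1 _ => h1 U rfl⟩
    · refine ⟨∅, K, finite_empty, by simp, hK,
        eq_empty_iff_forall_notMem.mpr (fun y hy => hH hy.1 hy.2), ?_⟩
      intro H' _ h2 y hy hyK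
      exact eq_empty_iff_forall_notMem.mp h2 y ⟨hy, hyK⟩
  | univ =>
    intro H _
    exact ⟨∅, ∅, finite_empty, by simp, isCompact_empty, inter_empty _,
      fun H' _ _ => mem_univ _⟩
  | inter s t _ _ ihs iht =>
    intro H hH
    obtain ⟨T1, K1, f1, p1, c1, d1, m1⟩ := ihs H hH.1
    obtain ⟨T2, K2, f2, p2, c2, d2, m2⟩ := iht H hH.2
    refine ⟨T1 ∪ T2, K1 ∪ K2, f1.union f2, ?_, c1.union c2, ?_, ?_⟩
    · rintro U (h | h)
      exacts [p1 U h, p2 U h]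
    · rw [inter_union_distrib_left, d1, d2, union_empty]
    · intro H' h1 h2
      rw [inter_union_distrib_left, union_empty_iff] at h2
      exact ⟨m1 H' (fun U hU => h1 U (Or.inl hU)) h2.1,
             m2 H' (fun U hU => h1 U (Or.inr hU)) h2.2⟩
  | sUnion 𝒮 _ ih =>
    intro H hH
    obtain ⟨s, hs, hHs⟩ := hH
    obtain ⟨T, K, f, pp, c, d, m⟩ := ih s hs H hHs
    exact ⟨T, K, f, pp, c, d, fun H' h1 h2 => ⟨s, hs, m H' h1 h2⟩⟩

lemma slab {S : Set (Set X)} {B : Set (FellHyper X S)} (hB : IsOpen B)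
    {A : Set X} (hAS : A ∈ S) (hA : (⟨A, hAS⟩ : FellHyper X S) ∈ B) :
    ∃ (T : Set (Set X)) (K : Set X), T.Finite ∧ (∀ U ∈ T, IsOpen U ∧ (A ∩ U).Nonempty) ∧
      IsCompact K ∧ A ∩ K = ∅ ∧
      ∀ (H : Set X) (hH : H ∈ S), (∀ U ∈ T, (H ∩ U).Nonempty) → H ∩ K = ∅ →
        (⟨H, hH⟩ : FellHyper X S) ∈ B := by
  obtain ⟨B', hgen, heq⟩ := hyper_isOpen_iff.mp hB
  have hA' : A ∈ B' := by rw [← heq] at hA; exact hA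
  obtain ⟨T, K, f, pp, c, d, m⟩ := fell_gen hgen A hA'
  exact ⟨T, K, f, pp, c, d, fun H hH h1 h2 => by rw [← heq]; exact m H h1 h2⟩

lemma hyper_open {S : Set (Set X)} {B' : Set (Set X)}
    (h : TopologicalSpace.GenerateOpen (FSub X) B') :
    IsOpen (Subtype.val ⁻¹' B' : Set (FellHyper X S)) :=
  hyper_isOpen_iff.mpr ⟨B', h, rfl⟩

lemma genOpen_iUnion {ι : Sort v} {f : ι → Set (Set X)}
    (h : ∀ i, TopologicalSpace.GenerateOpen (FSub X) (f i)) :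
    TopologicalSpace.GenerateOpen (FSub X) (⋃ i, f i) := by
  rw [← sUnion_range]
  exact .sUnion _ (by rintro _ ⟨i, rfl⟩; exact h i)

lemma genOpen_inter {s t : Set (Set X)}
    (h1 : TopologicalSpace.GenerateOpen (FSub X) s)
    (h2 : TopologicalSpace.GenerateOpen (FSub X) t) :
    TopologicalSpace.GenerateOpen (FSub X) (s ∩ t) :=
  .inter _ _ h1 h2

lemma genOpen_union {s t : Set (Set X)}
    (h1 : TopologicalSpace.GenerateOpen (FSub X) s)
    (h2 : TopologicalSpace.GenerateOpen (FSub X) t) :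
    TopologicalSpace.GenerateOpen (FSub X) (s ∪ t) := by
  rw [union_eq_iUnion]
  exact genOpen_iUnion (by rintro (_|_) <;> assumption)

lemma isOpen_all (hdisc : ∀ x : X, IsOpen ({x} : Set X)) (s : Set X) : IsOpen s := by
  rw [← biUnion_of_singleton s]
  exact isOpen_biUnion fun x _ => hdisc x

lemma compact_finite (hdisc : ∀ x : X, IsOpen ({x} : Set X)) {K : Set X}
    (hK : IsCompact K) : K.Finite := by
  obtain ⟨t, ht⟩ := hK.elim_finite_subcover (fun x : X => ({x} : Set X))
    (fun x => hdisc x) (fun x hx => mem_iUnion.mpr ⟨x, rfl⟩)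
  exact (t.finite_toSet.biUnion fun _ _ => finite_singleton _).subset ht

lemma not_D1_of_discrete (hdisc : ∀ x : X, IsOpen ({x} : Set X)) [Infinite X] :
    ¬ IsD1Space (FellHyper X (Fcal X)) := by
  intro hD1
  classical
  -- the set of singletons
  set F1 : Set (FellHyper X (Fcal X)) := {A | ∃ x : X, Subtype.val A = {x}} with hF1def
  have hF1ne : F1.Nonempty :=
    ⟨⟨{Classical.arbitrary X}, ⟨singleton_nonempty _, finite_singleton _⟩⟩, ⟨_, rfl⟩⟩
  have hF1cl : IsClosed F1 := by
    rw [← isOpen_compl_iff]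
    have hcompl : F1ᶜ = Subtype.val ⁻¹'
        (⋃ (a : X) (b : X) (_ : a ≠ b),
          ({H : Set X | (H ∩ {a}).Nonempty} ∩ {H : Set X | (H ∩ {b}).Nonempty})) := by
      ext A
      show A ∈ F1ᶜ ↔ Subtype.val A ∈ (⋃ (a : X) (b : X) (_ : a ≠ b),
        ({H : Set X | (H ∩ {a}).Nonempty} ∩ {H : Set X | (H ∩ {b}).Nonempty}))
      simp only [hF1def, mem_compl_iff, mem_setOf_eq, mem_preimage, mem_iUnion, mem_inter_iff,
        not_exists]
      constructor
      · intro h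
        obtain ⟨a, ha⟩ := A.2.1
        have : ¬ Subtype.val A ⊆ {a} := by
          intro hsub
          exact h a (subset_antisymm hsub (by simpa using ha))
        obtain ⟨b, hb, hba⟩ := not_subset.mp this
        exact ⟨a, b, Ne.symm hba, ⟨a, ha, rfl⟩, ⟨b, hb, rfl⟩⟩
      · rintro ⟨a, b, hab, ⟨y, hy1, hy2⟩, ⟨z, hz1, hz2⟩⟩ c hc
        rw [mem_singleton_iff] at hy2 hz2
        subst hy2; subst hz2
        rw [hc] at hy1 hz1
        exact hab (hy1.trans hz1.symm)
    rw [hcompl]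
    exact hyper_open (genOpen_iUnion fun a => genOpen_iUnion fun b => genOpen_iUnion fun _ =>
      genOpen_inter (genOpen_minus (hdisc a)) (genOpen_minus (hdisc b)))
  obtain ⟨B, hB1, hB2⟩ := hD1 F1 hF1ne hF1cl
  let e : ℕ ↪ X := Infinite.natEmbedding X
  let a : ℕ → X := fun n => e (2 * n)
  have hamem : ∀ n, ({a n} : Set X) ∈ Fcal X := fun n => ⟨singleton_nonempty _, finite_singleton _⟩
  have hslab : ∀ n : ℕ, ∃ K : Set X, K.Finite ∧ a n ∉ K ∧
      ∀ (H : Set X) (hH : H ∈ Fcal X), a n ∈ H → H ∩ K = ∅ →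
        (⟨H, hH⟩ : FellHyper X (Fcal X)) ∈ B n := by
    intro n
    have hmem : (⟨{a n}, hamem n⟩ : FellHyper X (Fcal X)) ∈ B n := (hB1 n).2 ⟨a n, rfl⟩
    obtain ⟨T, K, _, hTprop, hKc, hKd, hsl⟩ := slab (hB1 n).1 (hamem n) hmem
    refine ⟨K, compact_finite hdisc hKc, ?_, ?_⟩
    · intro h
      exact eq_empty_iff_forall_notMem.mp hKd (a n) ⟨rfl, h⟩
    · intro H hH haH hHK
      refine hsl H hH (fun U hU => ?_) hHK
      obtain ⟨y, hy1, hy2⟩ := (hTprop U hU).2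
      rw [mem_singleton_iff] at hy1
      exact ⟨a n, haH, hy1 ▸ hy2⟩
  choose K hKfin hKa hKsl using hslab
  -- recursive choice of b n
  have hex : ∀ (n : ℕ) (l : List ℕ), ∃ j : ℕ, j ∉ l ∧ e (2 * j + 1) ∉ K n := by
    intro n l
    have h1 : ({j : ℕ | e (2 * j + 1) ∈ K n}).Finite := by
      have : {j : ℕ | e (2 * j + 1) ∈ K n} = (fun j : ℕ => e (2 * j + 1)) ⁻¹' (K n) := rfl
      rw [this]
      apply Set.Finite.preimage _ (hKfin n)
      intro i _ j _ hij
      have := e.injective hij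
      omega
    have h2 : ({j : ℕ | j ∈ l} ∪ {j : ℕ | e (2 * j + 1) ∈ K n}).Finite :=
      (l.finite_toSet).union h1
    obtain ⟨j, hj⟩ := h2.infinite_compl.nonempty
    rw [mem_compl_iff, mem_union] at hj
    push_neg at hj
    exact ⟨j, hj.1, hj.2⟩
  let pick : ℕ → List ℕ → ℕ := fun n l => (hex n l).choose
  let chain : ℕ → List ℕ := fun n => Nat.rec [] (fun m ih => pick m ih :: ih) n
  let ψ : ℕ → ℕ := fun n => pick n (chain n)
  have hchain_succ : ∀ n, chain (n + 1) = ψ n :: chain n := fun n => rfl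
  have hψ1 : ∀ n, ψ n ∉ chain n := fun n => (hex n (chain n)).choose_spec.1
  have hψ2 : ∀ n, e (2 * ψ n + 1) ∉ K n := fun n => (hex n (chain n)).choose_spec.2
  have hmemchain : ∀ m n, m < n → ψ m ∈ chain n := by
    intro m n h
    induction n with
    | zero => omega
    | succ k ih =>
      rw [hchain_succ]
      rcases Nat.lt_succ_iff_lt_or_eq.mp h with h' | h'
      · exact List.mem_cons_of_mem _ (ih h')
      · subst h'; exact List.mem_cons_self
  have hψinj : Function.Injective ψ := by
    intro m n hmn
    by_contra hne
    rcases Nat.lt_or_ge m n with h | h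
    · exact hψ1 n (hmn ▸ hmemchain m n h)
    · have h' : n < m := by omega
      exact hψ1 m (hmn ▸ hmemchain n m h')
  let b : ℕ → X := fun n => e (2 * ψ n + 1)
  have haneb : ∀ n m, a n ≠ b m := by
    intro n m h
    have := e.injective h
    omega
  have hainj : Function.Injective a := by
    intro n m h
    have := e.injective h
    omega
  have hbinj : Function.Injective b := by
    intro n m h
    have := e.injective h
    exact hψinj (by omega)
  set D : Set X := range a ∪ range b with hDdef
  let w : ℕ → Set X := fun n => {a n, b n}
  have hwmem : ∀ n, w n ∈ Fcal X := fun n =>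
    ⟨⟨a n, Or.inl rfl⟩, (finite_singleton _).insert _⟩
  set V' : Set (Set X) :=
    {H : Set X | (H ∩ Dᶜ).Nonempty} ∪
    ((⋃ n : ℕ, ({H : Set X | (H ∩ {a n}).Nonempty} ∩ {H : Set X | H ⊆ ({b n} : Set X)ᶜ})) ∪
     (⋃ n : ℕ, ({H : Set X | (H ∩ {b n}).Nonempty} ∩ {H : Set X | H ⊆ ({a n} : Set X)ᶜ}))) with hV'def
  have hV'gen : TopologicalSpace.GenerateOpen (FSub X) V' := by
    refine genOpen_union (genOpen_minus (isOpen_all hdisc Dᶜ)) (genOpen_union ?_ ?_)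
    · exact genOpen_iUnion fun n =>
        genOpen_inter (genOpen_minus (hdisc (a n))) (genOpen_plus isCompact_singleton)
    · exact genOpen_iUnion fun n =>
        genOpen_inter (genOpen_minus (hdisc (b n))) (genOpen_plus isCompact_singleton)
  have hF1V : F1 ⊆ Subtype.val ⁻¹' V' := by
    rintro A ⟨x, hx⟩
    show Subtype.val A ∈ V'
    rw [hx]
    by_cases hxD : x ∈ D
    · rcases hxD with ⟨n, rfl⟩ | ⟨n, rfl⟩
      · refine Or.inr (Or.inl (mem_iUnion.mpr ⟨n, ⟨a n, rfl, rfl⟩, ?_⟩))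
        intro y hy
        rw [mem_singleton_iff] at hy
        subst hy
        simp only [mem_compl_iff, mem_singleton_iff]
        exact haneb n n
      · refine Or.inr (Or.inr (mem_iUnion.mpr ⟨n, ⟨b n, rfl, rfl⟩, ?_⟩))
        intro y hy
        rw [mem_singleton_iff] at hy
        subst hy
        simp only [mem_compl_iff, mem_singleton_iff]
        exact fun h => haneb n n h.symm
    · exact Or.inl ⟨x, rfl, hxD⟩
  obtain ⟨n, hn⟩ := hB2 _ (hyper_open hV'gen) hF1V
  have hwB : (⟨w n, hwmem n⟩ : FellHyper X (Fcal X)) ∈ B n := by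
    apply hKsl n (w n) (hwmem n) (Or.inl rfl)
    apply eq_empty_iff_forall_notMem.mpr
    rintro y ⟨hy1, hy2⟩
    rcases hy1 with rfl | rfl
    · exact hKa n hy2
    · exact hψ2 n hy2
  have hwV : w n ∈ V' := hn hwB
  rcases hwV with ⟨y, hy1, hy2⟩ | hwV | hwV
  · rcases hy1 with rfl | rfl
    · exact hy2 (Or.inl ⟨n, rfl⟩)
    · exact hy2 (Or.inr ⟨n, rfl⟩)
  · obtain ⟨m, ⟨y, hy1, hy2⟩, hsub⟩ := mem_iUnion.mp hwV
    rw [mem_singleton_iff] at hy2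
    subst hy2
    rcases hy1 with h | h
    · have : m = n := hainj h
      subst this
      exact hsub (Or.inr rfl) rfl
    · exact haneb m n h
  · obtain ⟨m, ⟨y, hy1, hy2⟩, hsub⟩ := mem_iUnion.mp hwV
    rw [mem_singleton_iff] at hy2
    subst hy2
    rcases hy1 with h | h
    · exact haneb n m h.symm
    · have : m = n := hbinj h
      subst this
      exact hsub (Or.inl rfl) rfl

lemma not_D1_of_nonisolated [T1Space X] [T2Space X] [Infinite X] {p : X}
    (hp : ∀ O : Set X, IsOpen O → p ∈ O → ∃ q, q ∈ O ∧ q ≠ p) :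
    ¬ IsD1Space (FellHyper X (Fcal X)) := by
  intro hD1
  classical
  -- injective sequence avoiding p
  have hcompl : ({p}ᶜ : Set X).Infinite := (finite_singleton p).infinite_compl
  let xe : ℕ ↪ ({p}ᶜ : Set X) := hcompl.natEmbedding
  let x : ℕ → X := fun k => (xe k : X)
  have hxinj : Function.Injective x := fun i j h => xe.injective (Subtype.ext h)
  have hxp : ∀ k, x k ≠ p := fun k => (xe k).2
  -- the closed set of finite sets containing p
  set F2 : Set (FellHyper X (Fcal X)) := {A | p ∈ Subtype.val A} with hF2def
  have hF2cl : IsClosed F2 := by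
    rw [← isOpen_compl_iff]
    have hcompl2 : F2ᶜ = Subtype.val ⁻¹' {H : Set X | H ⊆ ({p} : Set X)ᶜ} := by
      ext A
      simp only [hF2def, mem_compl_iff, mem_setOf_eq, mem_preimage, subset_compl_singleton_iff]
      exact Iff.rfl
    rw [hcompl2]
    exact hyper_open (genOpen_plus isCompact_singleton)
  have hpmem : ({p} : Set X) ∈ Fcal X := ⟨singleton_nonempty _, finite_singleton _⟩
  have hF2ne : F2.Nonempty := ⟨⟨{p}, hpmem⟩, rfl⟩
  obtain ⟨C, hC1, hC2⟩ := hD1 F2 hF2ne hF2cl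
  -- the finite sets E n and H n
  let E : ℕ → Set X := fun n => x '' (Iic n)
  have hEfin : ∀ n, (E n).Finite := fun n => (finite_Iic n).image x
  have hpE : ∀ n, p ∉ E n := by
    rintro n ⟨k, _, hk⟩
    exact hxp k hk
  let Hn : ℕ → Set X := fun n => insert p (E n)
  have hHmem : ∀ n, Hn n ∈ Fcal X := fun n => ⟨⟨p, mem_insert _ _⟩, (hEfin n).insert p⟩
  -- slabs
  have hslab : ∀ n : ℕ, ∃ (T : Set (Set X)) (Kk : Set X),
      T.Finite ∧ (∀ U ∈ T, IsOpen U ∧ (Hn n ∩ U).Nonempty) ∧ IsCompact Kk ∧ Hn n ∩ Kk = ∅ ∧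
      ∀ (H : Set X) (hH : H ∈ Fcal X), (∀ U ∈ T, (H ∩ U).Nonempty) → H ∩ Kk = ∅ →
        (⟨H, hH⟩ : FellHyper X (Fcal X)) ∈ C n := by
    intro n
    exact slab (hC1 n).1 (hHmem n) ((hC1 n).2 (mem_insert _ _))
  choose T Kk hTfin hTprop hKc hKdisj hsl using hslab
  let W : ℕ → Set X := fun n => (⋂₀ {U | U ∈ T n ∧ p ∈ U}) \ Kk n
  have hWopen : ∀ n, IsOpen (W n) := by
    intro n
    apply IsOpen.sdiff _ (hKc n).isClosed
    exact Set.Finite.isOpen_sInter ((hTfin n).subset (fun U hU => hU.1))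
      (fun U hU => (hTprop n U hU.1).1)
  have hpKk : ∀ n, p ∉ Kk n := fun n h =>
    eq_empty_iff_forall_notMem.mp (hKdisj n) p ⟨mem_insert _ _, h⟩
  have hpW : ∀ n, p ∈ W n := fun n => ⟨fun U hU => hU.2, hpKk n⟩
  -- choose q n
  have hq : ∀ n : ℕ, ∃ q, q ∈ W n \ E n ∧ q ≠ p := by
    intro n
    exact hp _ ((hWopen n).sdiff (hEfin n).isClosed) ⟨hpW n, hpE n⟩
  choose q hq1 hq2 using hq
  let w : ℕ → Set X := fun n => insert (q n) (E n)
  have hwmem : ∀ n, w n ∈ Fcal X := fun n => ⟨⟨q n, mem_insert _ _⟩, (hEfin n).insert _⟩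
  have hwfin : ∀ n, (w n).Finite := fun n => (hwmem n).2
  have hpw : ∀ n, p ∉ w n := by
    rintro n (h | h)
    · exact hq2 n h.symm
    · exact hpE n h
  have hwC : ∀ n, (⟨w n, hwmem n⟩ : FellHyper X (Fcal X)) ∈ C n := by
    intro n
    refine hsl n (w n) (hwmem n) ?_ ?_
    · intro U hU
      obtain ⟨y, hy1, hy2⟩ := (hTprop n U hU).2
      rcases hy1 with rfl | hy1
      · refine ⟨q n, mem_insert _ _, ?_⟩
        have : q n ∈ W n := (hq1 n).1
        exact this.1 U ⟨hU, hy2⟩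
      · exact ⟨y, Or.inr hy1, hy2⟩
    · apply eq_empty_iff_forall_notMem.mpr
      rintro y ⟨hy1, hy2⟩
      rcases hy1 with rfl | hy1
      · exact ((hq1 n).1).2 hy2
      · exact eq_empty_iff_forall_notMem.mp (hKdisj n) y ⟨Or.inr hy1, hy2⟩
  -- the index κ
  have hκex : ∀ H : Set X, H.Finite → ∃ k, x k ∉ H := by
    intro H hH
    by_contra hcon
    push_neg at hcon
    exact (Set.infinite_range_of_injective hxinj) (hH.subset (range_subset_iff.mpr hcon))
  let κ : Set X → ℕ := fun H => if h : H.Finite then (hκex H h).choose else 0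
  have hκspec : ∀ H : Set X, H.Finite → x (κ H) ∉ H := by
    intro H hH
    simp only [κ, dif_pos hH]
    exact (hκex H hH).choose_spec
  -- the adversary open set
  let Ω : Set X → Set X := fun H => (⋃ m ∈ Iio (κ H), w m)ᶜ
  have hΩopen : ∀ H, IsOpen (Ω H) :=
    fun H => isOpen_compl_iff.mpr ((finite_Iio _).biUnion (fun m _ => hwfin m)).isClosed
  have hpΩ : ∀ H, p ∈ Ω H := by
    intro H
    simp only [Ω, mem_compl_iff, mem_iUnion]
    rintro ⟨m, _, hm⟩
    exact hpw m hm
  set V' : Set (Set X) :=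
    ⋃ (H : Set X) (_ : p ∈ H ∧ H.Finite),
      ({H' : Set X | (H' ∩ Ω H).Nonempty} ∩ {H' : Set X | H' ⊆ ({x (κ H)} : Set X)ᶜ})
    with hV'def
  have hV'gen : TopologicalSpace.GenerateOpen (FSub X) V' :=
    genOpen_iUnion fun H => genOpen_iUnion fun _ =>
      genOpen_inter (genOpen_minus (hΩopen H)) (genOpen_plus isCompact_singleton)
  have hF2V : F2 ⊆ Subtype.val ⁻¹' V' := by
    intro A hA
    show Subtype.val A ∈ V'
    rw [hV'def]
    refine mem_iUnion.mpr ⟨Subtype.val A, mem_iUnion.mpr ⟨⟨hA, A.2.2⟩, ⟨p, hA, hpΩ _⟩, ?_⟩⟩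
    intro y hy
    simp only [mem_compl_iff, mem_singleton_iff]
    rintro rfl
    exact hκspec _ A.2.2 hy
  obtain ⟨n, hn⟩ := hC2 _ (hyper_open hV'gen) hF2V
  have hwV : w n ∈ V' := hn (hwC n)
  obtain ⟨s, ⟨H, rfl⟩, hs⟩ := hwV
  obtain ⟨s', ⟨⟨hpH, hHfin⟩, rfl⟩, hmem1, hmem2⟩ := hs
  rcases Nat.lt_or_ge n (κ H) with hlt | hge
  · obtain ⟨y, hy1, hy2⟩ := hmem1
    exact hy2 (mem_biUnion hlt hy1)
  · have hxw : x (κ H) ∈ w n := Or.inr ⟨κ H, hge, rfl⟩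
    exact hmem2 hxw rfl

lemma isD1Space_of_finite (Y : Type v) [TopologicalSpace Y] [Finite Y] : IsD1Space Y := by
  intro F _ _
  refine ⟨fun _ => ⋂₀ {V : Set Y | IsOpen V ∧ F ⊆ V}, fun n => ⟨?_, ?_⟩, ?_⟩
  · exact Set.Finite.isOpen_sInter (Set.toFinite _) (fun V hV => hV.1)
  · exact subset_sInter fun V hV => hV.2
  · intro V hV hFV
    exact ⟨0, sInter_subset_of_mem ⟨hV, hFV⟩⟩

end Statement7Aux

/-- `ℱ(X)` with the Fell topology is a `D₁`-space iff `X` is finite. -/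
theorem statement7 (X : Type u) [TopologicalSpace X] [T1Space X] [RegularSpace X] :
    IsD1Space (FellHyper X (Fcal X)) ↔ Finite X := by
  constructor
  · intro hD1
    by_contra hfin
    rw [not_finite_iff_infinite] at hfin
    by_cases hdisc : ∀ x : X, IsOpen ({x} : Set X)
    · exact Statement7Aux.not_D1_of_discrete hdisc hD1
    · push_neg at hdisc
      obtain ⟨p, hpo⟩ := hdisc
      have hp : ∀ O : Set X, IsOpen O → p ∈ O → ∃ q, q ∈ O ∧ q ≠ p := by
        intro O hO hpO
        by_contra hcon
        push_neg at hcon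
        have hOp : O = {p} := by
          apply subset_antisymm
          · intro y hy
            exact hcon y hy
          · rintro y rfl
            exact hpO
        exact hpo (hOp ▸ hO)
      exact Statement7Aux.not_D1_of_nonisolated hp hD1
  · intro h
    haveI : Finite (FellHyper X (Fcal X)) := by
      unfold FellHyper
      exact Subtype.finite
    exact Statement7Aux.isD1Space_of_finite _
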